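/- Let f: ℝ → ℝ be continuously differentiable with locally Hölder continuous derivative of exponent β ∈ (0,1], and suppose f(0) = 0. Then for every n ∈ ℕ and every ū > 0 there exists a constant b₁ > 0 such that for all u₁,…,uₙ ∈ [-ū, ū], |f(∑ᵢ uᵢ) - ∑ᵢ f(uᵢ)| ≤ b₁ ∑_{i<j} |uᵢ uⱼ|^β. -/

import Mathlib

open Finset NNReal

lemma real_add_rpow_le {β : ℝ} (hβ0 : 0 < β) (hβ1 : β ≤ 1) {x y : ℝ}
    (hx : 0 ≤ x) (hy : 0 ≤ y) : (x + y) ^ β ≤ x ^ β + y ^ β := by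
  have key := NNReal.rpow_add_le_add_rpow x.toNNReal y.toNNReal hβ0.le hβ1
  have hc : (((x.toNNReal + y.toNNReal) ^ β : ℝ≥0) : ℝ)
      ≤ (((x.toNNReal ^ β + y.toNNReal ^ β : ℝ≥0)) : ℝ) := by exact_mod_cast key
  rw [NNReal.coe_add, NNReal.coe_rpow, NNReal.coe_rpow, NNReal.coe_rpow, NNReal.coe_add,
    Real.coe_toNNReal _ hx, Real.coe_toNNReal _ hy] at hc
  exact hc

lemma sum_rpow_le_rpow_sum {β : ℝ} (hβ0 : 0 < β) (hβ1 : β ≤ 1) {ι : Type*} (s : Finset ι)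
    (a : ι → ℝ) (ha : ∀ i ∈ s, 0 ≤ a i) :
    (∑ i ∈ s, a i) ^ β ≤ ∑ i ∈ s, a i ^ β := by
  classical
  induction s using Finset.induction with
  | empty => simp [Real.zero_rpow hβ0.ne']
  | insert j t hi ih =>
    rw [Finset.sum_insert hi, Finset.sum_insert hi]
    have h1 : (a j + ∑ i ∈ t, a i) ^ β ≤ a j ^ β + (∑ i ∈ t, a i) ^ β :=
      real_add_rpow_le hβ0 hβ1 (ha j (Finset.mem_insert_self j t))
        (Finset.sum_nonneg fun i hi' => ha i (Finset.mem_insert_of_mem hi'))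
    exact h1.trans (by gcongr; exact ih fun i hi' => ha i (Finset.mem_insert_of_mem hi'))

lemma step_holder (f : ℝ → ℝ) (hdiff : Differentiable ℝ f) (hf0 : f 0 = 0)
    {β C M ub : ℝ} (hub : 0 < ub)
    (hC : ∀ s ∈ Set.Icc (-M) M, ∀ t ∈ Set.Icc (-M) M, |deriv f s - deriv f t| ≤ C * |s - t| ^ β)
    {x y : ℝ} (hx : |x| ≤ M - ub) (hy : |y| ≤ ub) :
    |f (x + y) - f x - f y| ≤ C * |x| ^ β * |y| := by
  have hubM : ub ≤ M := by have := abs_nonneg x; linarith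
  set g : ℝ → ℝ := fun t => f (x + t) - f t with hg
  have hgdiff : ∀ t : ℝ, DifferentiableAt ℝ g t := fun t =>
    ((hdiff (x + t)).comp t ((differentiableAt_id).const_add x)).sub (hdiff t)
  have hd1 : ∀ t : ℝ, HasDerivAt (fun s => f (x + s)) (deriv f (x + t)) t := by
    intro t
    have := ((hdiff (x + t)).hasDerivAt.comp t ((hasDerivAt_id t).const_add x))
    simpa [Function.comp_def] using this
  have hderiv : ∀ t : ℝ, deriv g t = deriv f (x + t) - deriv f t := by
    intro t
    exact ((hd1 t).sub (hdiff t).hasDerivAt).deriv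
  have bound : ∀ t ∈ Set.Icc (-ub) ub, ‖deriv g t‖ ≤ C * |x| ^ β := by
    intro t ht
    rw [hderiv t, Real.norm_eq_abs]
    have h1 : x + t ∈ Set.Icc (-M) M := by
      rw [Set.mem_Icc] at ht ⊢
      have := abs_le.mp hx
      constructor <;> linarith [ht.1, ht.2, this.1, this.2]
    have h2 : t ∈ Set.Icc (-M) M := by
      rw [Set.mem_Icc] at ht ⊢
      constructor <;> linarith [ht.1, ht.2]
    have := hC (x + t) h1 t h2
    simpa using this
  have h0 : (0 : ℝ) ∈ Set.Icc (-ub) ub := by constructor <;> linarith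
  have hym : y ∈ Set.Icc (-ub) ub := by
    have := abs_le.mp hy; exact ⟨this.1, this.2⟩
  have key := (convex_Icc (-ub) ub).norm_image_sub_le_of_norm_deriv_le
    (fun t _ => hgdiff t) bound h0 hym
  have hgy : g y - g 0 = f (x + y) - f x - f y := by
    simp only [hg, add_zero, hf0]
    ring
  rw [hgy, sub_zero, Real.norm_eq_abs, Real.norm_eq_abs] at key
  exact key

/-- If `f ∈ C¹` with locally `β`-Hölder derivative and `f 0 = 0`, then for every `n` and `ū > 0`
there is `b₁ > 0` with `|f (∑ uᵢ) - ∑ f uᵢ| ≤ b₁ ∑_{i<j} |uᵢ uⱼ|^β` for `uᵢ ∈ [-ū, ū]`. -/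
theorem stmt0 (f : ℝ → ℝ) (β : ℝ) (hβ0 : 0 < β) (hβ1 : β ≤ 1)
    (hdiff : Differentiable ℝ f)
    (hholder : ∀ K : Set ℝ, IsCompact K → ∃ C > 0, ∀ s ∈ K, ∀ t ∈ K,
      |deriv f s - deriv f t| ≤ C * |s - t| ^ β)
    (hf0 : f 0 = 0) (n : ℕ) (ub : ℝ) (hub : 0 < ub) :
    ∃ b₁ > 0, ∀ u : Fin n → ℝ, (∀ i, u i ∈ Set.Icc (-ub) ub) →
      |f (∑ i, u i) - ∑ i, f (u i)| ≤
        b₁ * ∑ i : Fin n, ∑ j ∈ Finset.Ioi i, |u i * u j| ^ β := by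
  set M : ℝ := ((n : ℝ) + 1) * ub with hM
  obtain ⟨C, hCpos, hC⟩ := hholder (Set.Icc (-M) M) isCompact_Icc
  have hubpow : (0 : ℝ) < ub ^ (1 - β) := Real.rpow_pos_of_pos hub _
  refine ⟨C * ub ^ (1 - β), by positivity, ?_⟩
  intro u hu
  classical
  set v : ℕ → ℝ := fun i => if h : i < n then u ⟨i, h⟩ else 0 with hv
  have hvu : ∀ i : Fin n, v ↑i = u i := by
    intro i; simp [hv, i.isLt]
  have hvb : ∀ i, |v i| ≤ ub := by
    intro i
    by_cases h : i < n
    · simp only [hv, dif_pos h]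
      have := hu ⟨i, h⟩
      rw [Set.mem_Icc] at this
      exact abs_le.mpr this
    · simp [hv, dif_neg h, hub.le]
  set S : ℕ → ℝ := fun k => ∑ i ∈ Finset.range k, v i with hS
  set G : ℕ → ℝ := fun k => f (S k) - ∑ i ∈ Finset.range k, f (v i) with hG
  -- per-step bound
  have hstep : ∀ k ∈ Finset.range n, |G (k + 1) - G k| ≤
      C * ub ^ (1 - β) * ∑ i ∈ Finset.range k, |v i * v k| ^ β := by
    intro k hk
    rw [Finset.mem_range] at hk
    have hGdiff : G (k + 1) - G k = f (S k + v k) - f (S k) - f (v k) := by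
      simp only [hG, hS, Finset.sum_range_succ]
      ring_nf
    have hSk : |S k| ≤ M - ub := by
      calc |S k| ≤ ∑ i ∈ Finset.range k, |v i| := Finset.abs_sum_le_sum_abs _ _
        _ ≤ ∑ _i ∈ Finset.range k, ub := Finset.sum_le_sum fun i _ => hvb i
        _ = (k : ℝ) * ub := by rw [Finset.sum_const, Finset.card_range]; ring
        _ ≤ (n : ℝ) * ub := by
            have : (k : ℝ) ≤ n := Nat.cast_le.mpr hk.le
            nlinarith
        _ = M - ub := by rw [hM]; ring
    have key := step_holder f hdiff hf0 hub hC hSk (hvb k)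
    rw [hGdiff]
    refine key.trans ?_
    -- C * |S k|^β * |v k| ≤ C * ub^(1-β) * ∑ ...
    have h1 : |v k| ≤ ub ^ (1 - β) * |v k| ^ β := by
      rcases eq_or_lt_of_le (abs_nonneg (v k)) with h0 | h0
      · rw [← h0]
        positivity
      · have h2 : |v k| ^ (1 - β) ≤ ub ^ (1 - β) :=
          Real.rpow_le_rpow (abs_nonneg _) (hvb k) (by linarith)
        calc |v k| = |v k| ^ β * |v k| ^ (1 - β) := by
              rw [← Real.rpow_add h0]; norm_num
          _ ≤ |v k| ^ β * ub ^ (1 - β) :=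
              mul_le_mul_of_nonneg_left h2 (Real.rpow_nonneg (abs_nonneg _) _)
          _ = ub ^ (1 - β) * |v k| ^ β := mul_comm _ _
    have h2 : |S k| ^ β ≤ ∑ i ∈ Finset.range k, |v i| ^ β := by
      calc |S k| ^ β ≤ (∑ i ∈ Finset.range k, |v i|) ^ β :=
            Real.rpow_le_rpow (abs_nonneg _) (Finset.abs_sum_le_sum_abs _ _) hβ0.le
        _ ≤ ∑ i ∈ Finset.range k, |v i| ^ β :=
            sum_rpow_le_rpow_sum hβ0 hβ1 _ _ fun i _ => abs_nonneg _
    have h3 : ∀ i, |v i| ^ β * |v k| ^ β = |v i * v k| ^ β := by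
      intro i
      rw [abs_mul, Real.mul_rpow (abs_nonneg _) (abs_nonneg _)]
    calc C * |S k| ^ β * |v k| ≤ C * (∑ i ∈ Finset.range k, |v i| ^ β)
          * (ub ^ (1 - β) * |v k| ^ β) := by
          apply mul_le_mul
          · exact mul_le_mul_of_nonneg_left h2 hCpos.le
          · exact h1
          · exact abs_nonneg _
          · positivity
      _ = C * ub ^ (1 - β) * ∑ i ∈ Finset.range k, |v i| ^ β * |v k| ^ β := by
          rw [← Finset.sum_mul]; ring
      _ = C * ub ^ (1 - β) * ∑ i ∈ Finset.range k, |v i * v k| ^ β := by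
          congr 1
          exact Finset.sum_congr rfl fun i _ => h3 i
  -- telescoping
  have hG0 : G 0 = 0 := by simp [hG, hS, hf0]
  have htel : G n = ∑ k ∈ Finset.range n, (G (k + 1) - G k) := by
    rw [Finset.sum_range_sub G n, hG0, sub_zero]
  have hmain : |G n| ≤ C * ub ^ (1 - β) *
      ∑ k ∈ Finset.range n, ∑ i ∈ Finset.range k, |v i * v k| ^ β := by
    rw [htel]
    calc |∑ k ∈ Finset.range n, (G (k + 1) - G k)|
        ≤ ∑ k ∈ Finset.range n, |G (k + 1) - G k| := Finset.abs_sum_le_sum_abs _ _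
      _ ≤ ∑ k ∈ Finset.range n, C * ub ^ (1 - β) * ∑ i ∈ Finset.range k, |v i * v k| ^ β :=
          Finset.sum_le_sum hstep
      _ = C * ub ^ (1 - β) * ∑ k ∈ Finset.range n, ∑ i ∈ Finset.range k, |v i * v k| ^ β := by
          rw [Finset.mul_sum]
  -- identify G n with the goal's LHS
  have hfin1 : ∑ i : Fin n, u i = S n := by
    show ∑ i : Fin n, u i = ∑ i ∈ Finset.range n, v i
    rw [← Fin.sum_univ_eq_sum_range v n]
    exact Finset.sum_congr rfl fun i _ => (hvu i).symm
  have hfin2 : ∑ i : Fin n, f (u i) = ∑ i ∈ Finset.range n, f (v i) := by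
    rw [← Fin.sum_univ_eq_sum_range (fun i => f (v i)) n]
    exact Finset.sum_congr rfl fun i _ => by rw [hvu i]
  -- index swap for the double sum
  have hswap : ∑ i : Fin n, ∑ j ∈ Finset.Ioi i, |u i * u j| ^ β
      = ∑ k ∈ Finset.range n, ∑ i ∈ Finset.range k, |v i * v k| ^ β := by
    have step1 : ∑ i : Fin n, ∑ j ∈ Finset.Ioi i, |u i * u j| ^ β
        = ∑ j : Fin n, ∑ i ∈ Finset.Iio j, |u i * u j| ^ β := by
      apply Finset.sum_comm'
      intro i j
      simp only [Finset.mem_univ, Finset.mem_Ioi, Finset.mem_Iio, true_and, and_true]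
    have step2 : ∀ j : Fin n, ∑ i ∈ Finset.Iio j, |u i * u j| ^ β
        = ∑ m ∈ Finset.range ↑j, |v m * v ↑j| ^ β := by
      intro j
      rw [← Nat.Iio_eq_range, ← Fin.map_valEmbedding_Iio, Finset.sum_map]
      exact Finset.sum_congr rfl fun i _ => by rw [Fin.valEmbedding_apply, hvu i, hvu j]
    rw [step1]
    rw [Finset.sum_congr rfl fun j _ => step2 j]
    exact Fin.sum_univ_eq_sum_range (fun k => ∑ m ∈ Finset.range k, |v m * v k| ^ β) n
  rw [hfin1, hfin2, hswap]
  exact hmain
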